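/- Under Assumption 1, the law of the pair (S₋ⁱ, S₊ⁱ) is symmetric: P(S₋ⁱ = k, S₊ⁱ = ℓ) = P(S₋ⁱ = ℓ, S₊ⁱ = k) for all k, ℓ ∈ ℕ₀ ∪ {∞}; in particular, S₋ⁱ and S₊ⁱ have the same distribution. -/

import Mathlib

open MeasureTheory Filter Set ENNReal
open scoped Function

noncomputable section

set_option linter.unusedSectionVars false
set_option maxHeartbeats 1000000

namespace ClusterSym

abbrev Path := ℤ → Bool

def shift (b : ℤ) (x : Path) : Path := fun t => x (t + b)

lemma measurable_shift (b : ℤ) : Measurable (shift b) :=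
  measurable_pi_lambda _ (fun t => measurable_pi_apply (t + b))

/-- cylinder sets -/
def cylC (F : Finset ℤ) (ε : ℤ → Bool) : Set Path := {x | ∀ t ∈ F, x t = ε t}

lemma measurableSet_cylC (F : Finset ℤ) (ε : ℤ → Bool) : MeasurableSet (cylC F ε) := by
  have h : cylC F ε = ⋂ t ∈ F, (fun x : Path => x t) ⁻¹' {ε t} := by
    ext x; simp [cylC]
  rw [h]
  exact MeasurableSet.biInter F.countable_toSet
    (fun t _ => measurable_pi_apply t (measurableSet_singleton (ε t)))

def CylSet : Set (Set Path) := {S | ∃ F ε, S = cylC F ε}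

lemma isPiSystem_cylSet : IsPiSystem CylSet := by
  rintro s ⟨F₁, ε₁, rfl⟩ t ⟨F₂, ε₂, rfl⟩ hne
  obtain ⟨x₀, hx₁, hx₂⟩ := hne
  classical
  refine ⟨F₁ ∪ F₂, fun t => if t ∈ F₁ then ε₁ t else ε₂ t, ?_⟩
  ext x
  simp only [cylC, Set.mem_inter_iff, Set.mem_setOf_eq, Finset.mem_union]
  constructor
  · rintro ⟨h1, h2⟩ t ht
    by_cases hF : t ∈ F₁
    · simp [hF, h1 t hF]
    · simp [hF, h2 t (ht.resolve_left hF)]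
  · intro h
    constructor
    · intro t ht
      have := h t (Or.inl ht); simpa [ht] using this
    · intro t ht
      by_cases hF : t ∈ F₁
      · have := h t (Or.inl hF)
        have hcomp : ε₁ t = ε₂ t := by
          rw [← hx₁ t hF, hx₂ t ht]
        simp only [hF, if_pos] at this
        rw [this, hcomp]
      · have := h t (Or.inr ht); simpa [hF] using this

lemma generateFrom_cylSet :
    (inferInstance : MeasurableSpace Path) = .generateFrom CylSet := by
  apply le_antisymm
  · rw [show (inferInstance : MeasurableSpace Path) = MeasurableSpace.pi from rfl]
    refine iSup_le fun t => ?_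
    rw [← measurable_iff_comap_le]
    refine @measurable_to_countable' Bool Path _ _ (.generateFrom CylSet) (fun x => x t) ?_
    intro b
    have : (fun x : Path => x t) ⁻¹' {b} = cylC {t} (fun _ => b) := by
      ext x; simp [cylC]
    rw [this]
    exact MeasurableSpace.measurableSet_generateFrom ⟨{t}, fun _ => b, rfl⟩
  · exact MeasurableSpace.generateFrom_le fun s ⟨F, ε, hs⟩ => hs ▸ measurableSet_cylC F ε

lemma shift_preimage_cylC (b : ℤ) (F : Finset ℤ) (ε : ℤ → Bool) :
    shift b ⁻¹' cylC F ε = cylC (F.image (· + b)) (fun s => ε (s - b)) := by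
  ext x
  simp only [cylC, Set.mem_preimage, Set.mem_setOf_eq, Finset.mem_image, shift]
  constructor
  · rintro h s ⟨t, ht, rfl⟩
    simpa using h t ht
  · intro h t ht
    have := h (t + b) ⟨t, ht, rfl⟩
    simpa using this

-- part 2
def coordT (a : ℤ) : Set Path := {x | x a = true}

lemma measurableSet_coordT (a : ℤ) : MeasurableSet (coordT a) := by
  have h : coordT a = (fun x : Path => x a) ⁻¹' {true} := by ext x; simp [coordT]
  rw [h]
  exact measurable_pi_apply a (measurableSet_singleton true)

lemma shift_preimage_coordT (b a : ℤ) : shift b ⁻¹' coordT a = coordT (a + b) := rfl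

lemma coordT_eq_cylC (a : ℤ) :
    coordT 0 ∩ coordT a = cylC {0, a} (fun _ => true) := by
  ext x
  simp [coordT, cylC]


-- PART 3 (to be appended after part 1&2 content)
def FullSet (A : Finset ℤ) : Set Path := {x | ∀ t, x t = decide (t ∈ A)}

def RightSet (B : Finset ℤ) (m : ℤ) : Set Path :=
  {x | ∀ t, m ≤ t → x t = decide (t ∈ B)}

def InfSet : Set Path := {x | {t : ℤ | x t = true}.Infinite}

def NegCyl (A : Finset ℤ) : Set Path := {x | ∀ t, t < 0 → x t = decide (t ∈ A)}
def PosCyl (A : Finset ℤ) : Set Path := {x | ∀ t, 0 < t → x t = decide (t ∈ A)}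

def SmP (x : Path) : ℕ∞ := {t : ℤ | t < 0 ∧ x t = true}.encard
def SpP (x : Path) : ℕ∞ := {t : ℤ | 0 < t ∧ x t = true}.encard

lemma coordSet_meas (t : ℤ) (b : Bool) : MeasurableSet {x : Path | x t = b} := by
  have h : {x : Path | x t = b} = (fun x : Path => x t) ⁻¹' {b} := by ext x; simp
  rw [h]; exact measurable_pi_apply t (measurableSet_singleton b)

lemma measurableSet_FullSet (A : Finset ℤ) : MeasurableSet (FullSet A) := by
  have h : FullSet A = ⋂ t : ℤ, {x : Path | x t = decide (t ∈ A)} := by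
    ext x; simp [FullSet]
  rw [h]; exact MeasurableSet.iInter fun t => coordSet_meas t _

lemma measurableSet_RightSet (B : Finset ℤ) (m : ℤ) : MeasurableSet (RightSet B m) := by
  have h : RightSet B m = ⋂ t : ℤ, ⋂ (_ : m ≤ t), {x : Path | x t = decide (t ∈ B)} := by
    ext x; simp [RightSet]
  rw [h]; exact MeasurableSet.iInter fun t => MeasurableSet.iInter fun _ => coordSet_meas t _

lemma measurableSet_NegCyl (A : Finset ℤ) : MeasurableSet (NegCyl A) := by
  have h : NegCyl A = ⋂ t : ℤ, ⋂ (_ : t < 0), {x : Path | x t = decide (t ∈ A)} := by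
    ext x; simp [NegCyl]
  rw [h]; exact MeasurableSet.iInter fun t => MeasurableSet.iInter fun _ => coordSet_meas t _

lemma measurableSet_PosCyl (A : Finset ℤ) : MeasurableSet (PosCyl A) := by
  have h : PosCyl A = ⋂ t : ℤ, ⋂ (_ : 0 < t), {x : Path | x t = decide (t ∈ A)} := by
    ext x; simp [PosCyl]
  rw [h]; exact MeasurableSet.iInter fun t => MeasurableSet.iInter fun _ => coordSet_meas t _

lemma infinite_iff_finset (s : Set ℤ) : s.Infinite ↔ ∀ F : Finset ℤ, ∃ t ∉ F, t ∈ s := by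
  constructor
  · intro hs F
    obtain ⟨t, hts, htF⟩ := (hs.diff F.finite_toSet).nonempty
    exact ⟨t, by simpa using htF, hts⟩
  · intro h
    by_contra hfin
    rw [Set.not_infinite] at hfin
    obtain ⟨t, htF, hts⟩ := h hfin.toFinset
    exact htF (hfin.mem_toFinset.mpr hts)

lemma measurableSet_InfSet : MeasurableSet InfSet := by
  have h : InfSet = ⋂ F : Finset ℤ, ⋃ t : ℤ, ⋃ (_ : t ∉ F), {x : Path | x t = true} := by
    ext x
    simp only [InfSet, Set.mem_setOf_eq, Set.mem_iInter, Set.mem_iUnion]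
    rw [infinite_iff_finset]
    constructor
    · intro h F; obtain ⟨t, h1, h2⟩ := h F; exact ⟨t, h1, h2⟩
    · intro h F; obtain ⟨t, h1, h2⟩ := h F; exact ⟨t, h1, h2⟩
  rw [h]
  exact MeasurableSet.iInter fun F => MeasurableSet.iUnion fun t =>
    MeasurableSet.iUnion fun _ => coordSet_meas t true

lemma smp_negCyl {A : Finset ℤ} (hA : ∀ a ∈ A, a < 0) {x : Path} (hx : x ∈ NegCyl A) :
    SmP x = A.card := by
  have h : {t : ℤ | t < 0 ∧ x t = true} = (A : Set ℤ) := by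
    ext t
    simp only [Set.mem_setOf_eq, Finset.coe_mem, Finset.mem_coe]
    constructor
    · rintro ⟨ht, hxt⟩
      have := hx t ht
      rw [this] at hxt
      exact of_decide_eq_true hxt
    · intro ht
      refine ⟨hA t ht, ?_⟩
      rw [hx t (hA t ht)]
      simp [ht]
  rw [SmP, h, Set.encard_coe_eq_coe_finsetCard]

lemma spp_posCyl {A : Finset ℤ} (hA : ∀ a ∈ A, 0 < a) {x : Path} (hx : x ∈ PosCyl A) :
    SpP x = A.card := by
  have h : {t : ℤ | 0 < t ∧ x t = true} = (A : Set ℤ) := by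
    ext t
    simp only [Set.mem_setOf_eq, Finset.mem_coe]
    constructor
    · rintro ⟨ht, hxt⟩
      have := hx t ht
      rw [this] at hxt
      exact of_decide_eq_true hxt
    · intro ht
      refine ⟨hA t ht, ?_⟩
      rw [hx t (hA t ht)]
      simp [ht]
  rw [SpP, h, Set.encard_coe_eq_coe_finsetCard]

lemma smp_eq_coe_iff {x : Path} {k : ℕ} :
    SmP x = (k : ℕ∞) ↔ ∃ A : Finset ℤ, (∀ a ∈ A, a < 0) ∧ A.card = k ∧ x ∈ NegCyl A := by
  constructor
  · intro h
    have hfin : {t : ℤ | t < 0 ∧ x t = true}.Finite := Set.finite_of_encard_eq_coe h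
    refine ⟨hfin.toFinset, ?_, ?_, ?_⟩
    · intro a ha; exact (hfin.mem_toFinset.mp ha).1
    · have := hfin.encard_eq_coe_toFinset_card
      rw [← SmP, h] at this
      exact_mod_cast this.symm
    · intro t ht
      by_cases hxt : x t = true
      · have : t ∈ hfin.toFinset := hfin.mem_toFinset.mpr ⟨ht, hxt⟩
        simp [hxt, this]
      · have : t ∉ hfin.toFinset := by
          rw [hfin.mem_toFinset]; rintro ⟨_, h2⟩; exact hxt h2
        simp [this, hxt]
  · rintro ⟨A, hA, hcard, hx⟩
    rw [smp_negCyl hA hx, hcard]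

lemma spp_eq_coe_iff {x : Path} {k : ℕ} :
    SpP x = (k : ℕ∞) ↔ ∃ A : Finset ℤ, (∀ a ∈ A, 0 < a) ∧ A.card = k ∧ x ∈ PosCyl A := by
  constructor
  · intro h
    have hfin : {t : ℤ | 0 < t ∧ x t = true}.Finite := Set.finite_of_encard_eq_coe h
    refine ⟨hfin.toFinset, ?_, ?_, ?_⟩
    · intro a ha; exact (hfin.mem_toFinset.mp ha).1
    · have := hfin.encard_eq_coe_toFinset_card
      rw [← SpP, h] at this
      exact_mod_cast this.symm
    · intro t ht
      by_cases hxt : x t = true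
      · have : t ∈ hfin.toFinset := hfin.mem_toFinset.mpr ⟨ht, hxt⟩
        simp [hxt, this]
      · have : t ∉ hfin.toFinset := by
          rw [hfin.mem_toFinset]; rintro ⟨_, h2⟩; exact hxt h2
        simp [this, hxt]
  · rintro ⟨A, hA, hcard, hx⟩
    rw [spp_posCyl hA hx, hcard]

lemma measurableSet_SmP_eq (k : ℕ∞) : MeasurableSet {x : Path | SmP x = k} := by
  have hcoe : ∀ j : ℕ, MeasurableSet {x : Path | SmP x = (j : ℕ∞)} := by
    intro j
    have h : {x : Path | SmP x = (j : ℕ∞)}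
        = ⋃ A : Finset ℤ, ⋃ (_ : (∀ a ∈ A, a < 0) ∧ A.card = j), NegCyl A := by
      ext x
      simp only [Set.mem_setOf_eq, Set.mem_iUnion, smp_eq_coe_iff]
      constructor
      · rintro ⟨A, h1, h2, h3⟩; exact ⟨A, ⟨h1, h2⟩, h3⟩
      · rintro ⟨A, ⟨h1, h2⟩, h3⟩; exact ⟨A, h1, h2, h3⟩
    rw [h]
    exact MeasurableSet.iUnion fun A => MeasurableSet.iUnion fun _ => measurableSet_NegCyl A
  cases k with
  | top =>
    have h : {x : Path | SmP x = ⊤} = (⋃ j : ℕ, {x : Path | SmP x = (j : ℕ∞)})ᶜ := by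
      ext x
      simp only [Set.mem_setOf_eq, Set.mem_compl_iff, Set.mem_iUnion, not_exists]
      constructor
      · intro h j hj; rw [h] at hj; exact absurd hj (by simp)
      · intro h
        cases hSm : SmP x with
        | top => rfl
        | coe j => exact absurd hSm (h j)
    rw [h]
    exact (MeasurableSet.iUnion hcoe).compl
  | coe j => exact hcoe j

lemma measurableSet_SpP_eq (k : ℕ∞) : MeasurableSet {x : Path | SpP x = k} := by
  have hcoe : ∀ j : ℕ, MeasurableSet {x : Path | SpP x = (j : ℕ∞)} := by
    intro j
    have h : {x : Path | SpP x = (j : ℕ∞)}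
        = ⋃ A : Finset ℤ, ⋃ (_ : (∀ a ∈ A, 0 < a) ∧ A.card = j), PosCyl A := by
      ext x
      simp only [Set.mem_setOf_eq, Set.mem_iUnion, spp_eq_coe_iff]
      constructor
      · rintro ⟨A, h1, h2, h3⟩; exact ⟨A, ⟨h1, h2⟩, h3⟩
      · rintro ⟨A, ⟨h1, h2⟩, h3⟩; exact ⟨A, h1, h2, h3⟩
    rw [h]
    exact MeasurableSet.iUnion fun A => MeasurableSet.iUnion fun _ => measurableSet_PosCyl A
  cases k with
  | top =>
    have h : {x : Path | SpP x = ⊤} = (⋃ j : ℕ, {x : Path | SpP x = (j : ℕ∞)})ᶜ := by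
      ext x
      simp only [Set.mem_setOf_eq, Set.mem_compl_iff, Set.mem_iUnion, not_exists]
      constructor
      · intro h j hj; rw [h] at hj; exact absurd hj (by simp)
      · intro h
        cases hSm : SpP x with
        | top => rfl
        | coe j => exact absurd hSm (h j)
    rw [h]
    exact (MeasurableSet.iUnion hcoe).compl
  | coe j => exact hcoe j

lemma mem_image_addz (A : Finset ℤ) (b s : ℤ) : s ∈ A.image (· + b) ↔ s - b ∈ A := by
  simp only [Finset.mem_image]
  constructor
  · rintro ⟨t, ht, rfl⟩; simpa using ht
  · intro h; exact ⟨s - b, h, by ring⟩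

lemma shift_preimage_FullSet (b : ℤ) (A : Finset ℤ) :
    shift b ⁻¹' FullSet A = FullSet (A.image (· + b)) := by
  ext x
  simp only [FullSet, Set.mem_preimage, Set.mem_setOf_eq, shift]
  constructor
  · intro h s
    have h2 := h (s - b)
    have e : s - b + b = s := by ring
    rw [e] at h2
    rw [h2]
    exact decide_eq_decide.mpr (mem_image_addz A b s).symm
  · intro h t
    have h2 := h (t + b)
    rw [h2]
    refine decide_eq_decide.mpr ?_
    rw [mem_image_addz]
    simp

lemma shift_preimage_RightSet (b : ℤ) (B : Finset ℤ) (m : ℤ) :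
    shift b ⁻¹' RightSet B m = RightSet (B.image (· + b)) (m + b) := by
  ext x
  simp only [RightSet, Set.mem_preimage, Set.mem_setOf_eq, shift]
  constructor
  · intro h s hs
    have h2 := h (s - b) (by linarith)
    have e : s - b + b = s := by ring
    rw [e] at h2
    rw [h2]
    exact decide_eq_decide.mpr (mem_image_addz B b s).symm
  · intro h t ht
    have h2 := h (t + b) (by linarith)
    rw [h2]
    refine decide_eq_decide.mpr ?_
    rw [mem_image_addz]
    simp

lemma shift_preimage_InfSet (b : ℤ) : shift b ⁻¹' InfSet = InfSet := by
  ext x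
  simp only [InfSet, Set.mem_preimage, Set.mem_setOf_eq, shift]
  have himg : {t : ℤ | x (t + b) = true} = (fun t => t - b) '' {t : ℤ | x t = true} := by
    ext t
    simp only [Set.mem_setOf_eq, Set.mem_image]
    constructor
    · intro h; exact ⟨t + b, h, by ring⟩
    · rintro ⟨s, hs, rfl⟩
      have e : s - b + b = s := by ring
      rw [e]; exact hs
  rw [himg, Set.infinite_image_iff (fun u _ v _ h => by simpa using congrArg (· + b) h)]

def reflP : Path → Path := fun x t => x (-t)

lemma measurable_reflP : Measurable reflP :=
  measurable_pi_lambda _ fun t => measurable_pi_apply (-t)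

lemma refl_preimage_cylC (F : Finset ℤ) (ε : ℤ → Bool) :
    reflP ⁻¹' cylC F ε = cylC (F.image Neg.neg) (fun s => ε (-s)) := by
  ext x
  simp only [cylC, Set.mem_preimage, Set.mem_setOf_eq, reflP, Finset.mem_image]
  constructor
  · rintro h s ⟨t, ht, rfl⟩
    rw [neg_neg]
    exact h t ht
  · intro h t ht
    have := h (-t) ⟨t, ht, rfl⟩
    rwa [neg_neg] at this

lemma spp_reflP (x : Path) : SpP (reflP x) = SmP x := by
  rw [SpP, SmP]
  have himg : {t : ℤ | 0 < t ∧ reflP x t = true} = Neg.neg '' {t : ℤ | t < 0 ∧ x t = true} := by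
    ext t
    simp only [Set.mem_setOf_eq, Set.mem_image, reflP]
    constructor
    · rintro ⟨h1, h2⟩; exact ⟨-t, ⟨by linarith, h2⟩, by ring⟩
    · rintro ⟨s, ⟨h1, h2⟩, rfl⟩; exact ⟨by linarith, by rwa [neg_neg]⟩
  rw [himg, (neg_injective.injOn).encard_image]

lemma smp_reflP (x : Path) : SmP (reflP x) = SpP x := by
  rw [SpP, SmP]
  have himg : {t : ℤ | t < 0 ∧ reflP x t = true} = Neg.neg '' {t : ℤ | 0 < t ∧ x t = true} := by
    ext t
    simp only [Set.mem_setOf_eq, Set.mem_image, reflP]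
    constructor
    · rintro ⟨h1, h2⟩; exact ⟨-t, ⟨by linarith, h2⟩, by ring⟩
    · rintro ⟨s, ⟨h1, h2⟩, rfl⟩; exact ⟨by linarith, by rwa [neg_neg]⟩
  rw [himg, (neg_injective.injOn).encard_image]

lemma rank_unique {A : Finset ℤ} {a a' : ℤ} (ha : a ∈ A) (ha' : a' ∈ A)
    (h : (A.filter (· < a)).card = (A.filter (· < a')).card) : a = a' := by
  classical
  by_contra hne
  rcases lt_or_gt_of_ne hne with hlt | hlt
  · have hss : A.filter (· < a) ⊂ A.filter (· < a') := by
      refine Finset.ssubset_iff_of_subset (Finset.monotone_filter_right A fun b _ hb => lt_trans hb hlt) |>.mpr ?_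
      exact ⟨a, Finset.mem_filter.mpr ⟨ha, hlt⟩, fun hmem => lt_irrefl a (Finset.mem_filter.mp hmem).2⟩
    exact absurd h (Nat.ne_of_lt (Finset.card_lt_card hss))
  · have hss : A.filter (· < a') ⊂ A.filter (· < a) := by
      refine Finset.ssubset_iff_of_subset (Finset.monotone_filter_right A fun b _ hb => lt_trans hb hlt) |>.mpr ?_
      exact ⟨a', Finset.mem_filter.mpr ⟨ha', hlt⟩, fun hmem => lt_irrefl a' (Finset.mem_filter.mp hmem).2⟩
    exact absurd h.symm (Nat.ne_of_lt (Finset.card_lt_card hss))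

lemma filter_le_eq_insert {A : Finset ℤ} {a : ℤ} (ha : a ∈ A) :
    A.filter (· ≤ a) = insert a (A.filter (· < a)) := by
  ext b
  simp only [Finset.mem_filter, Finset.mem_insert]
  constructor
  · rintro ⟨hb, hba⟩
    rcases lt_or_eq_of_le hba with h | h
    · exact Or.inr ⟨hb, h⟩
    · exact Or.inl h
  · rintro (rfl | ⟨hb, hba⟩)
    · exact ⟨ha, le_refl _⟩
    · exact ⟨hb, le_of_lt hba⟩

lemma card_filter_le {A : Finset ℤ} {a : ℤ} (ha : a ∈ A) :
    (A.filter (· ≤ a)).card = (A.filter (· < a)).card + 1 := by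
  rw [filter_le_eq_insert ha]
  exact Finset.card_insert_of_notMem (fun h => lt_irrefl a (Finset.mem_filter.mp h).2)

lemma card_split {A : Finset ℤ} {a : ℤ} (ha : a ∈ A) :
    A.card = (A.filter (· < a)).card + 1 + (A.filter (a < ·)).card := by
  classical
  have h1 := Finset.card_filter_add_card_filter_not (s := A) (p := (· ≤ a))
  have h2 : A.filter (fun b => ¬ b ≤ a) = A.filter (a < ·) := by
    apply Finset.filter_congr
    intro b _
    simp [not_le]
  rw [h2, card_filter_le ha] at h1
  omega

lemma rank_exists (A : Finset ℤ) : ∀ j, j < A.card → ∃ a ∈ A, (A.filter (· < a)).card = j := by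
  intro j
  induction j with
  | zero =>
    intro hj
    have hne : A.Nonempty := Finset.card_pos.mp hj
    refine ⟨A.min' hne, A.min'_mem hne, ?_⟩
    rw [Finset.card_eq_zero, Finset.filter_eq_empty_iff]
    intro b hb
    exact not_lt.mpr (A.min'_le b hb)
  | succ j ih =>
    intro hj
    obtain ⟨a, ha, hcard⟩ := ih (Nat.lt_of_succ_lt hj)
    have hTne : (A.filter (a < ·)).Nonempty := by
      rw [Finset.nonempty_iff_ne_empty]
      intro hT
      have := card_split ha
      rw [hT] at this
      simp [hcard] at this
      omega
    set a' := (A.filter (a < ·)).min' hTne with ha'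
    have ha'A : a' ∈ A := (Finset.mem_filter.mp ((A.filter (a < ·)).min'_mem hTne)).1
    have haa' : a < a' := (Finset.mem_filter.mp ((A.filter (a < ·)).min'_mem hTne)).2
    refine ⟨a', ha'A, ?_⟩
    have heq : A.filter (· < a') = A.filter (· ≤ a) := by
      ext b
      simp only [Finset.mem_filter]
      constructor
      · rintro ⟨hb, hba'⟩
        refine ⟨hb, ?_⟩
        by_contra hab
        push_neg at hab
        have : a' ≤ b := Finset.min'_le _ b (Finset.mem_filter.mpr ⟨hb, hab⟩)
        omega
      · rintro ⟨hb, hba⟩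
        exact ⟨hb, by omega⟩
    rw [heq, card_filter_le ha, hcard]

lemma filter_lt_image (A : Finset ℤ) (c a : ℤ) :
    ((A.image (· + c)).filter (· < a + c)) = (A.filter (· < a)).image (· + c) := by
  ext b
  simp only [Finset.mem_filter, Finset.mem_image]
  constructor
  · rintro ⟨⟨t, ht, rfl⟩, hlt⟩
    exact ⟨t, ⟨ht, by omega⟩, rfl⟩
  · rintro ⟨t, ⟨ht, hlt⟩, rfl⟩
    exact ⟨⟨t, ht, rfl⟩, by omega⟩

lemma card_filter_lt_image (A : Finset ℤ) (c a : ℤ) :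
    ((A.image (· + c)).filter (· < a + c)).card = (A.filter (· < a)).card := by
  rw [filter_lt_image, Finset.card_image_of_injective _ (add_left_injective c)]

lemma filter_gt_image (A : Finset ℤ) (c a : ℤ) :
    ((A.image (· + c)).filter ((a + c) < ·)) = (A.filter (a < ·)).image (· + c) := by
  ext b
  simp only [Finset.mem_filter, Finset.mem_image]
  constructor
  · rintro ⟨⟨t, ht, rfl⟩, hlt⟩
    exact ⟨t, ⟨ht, by omega⟩, rfl⟩
  · rintro ⟨t, ⟨ht, hlt⟩, rfl⟩
    exact ⟨⟨t, ht, rfl⟩, by omega⟩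

lemma card_filter_gt_image (A : Finset ℤ) (c a : ℤ) :
    ((A.image (· + c)).filter ((a + c) < ·)).card = (A.filter (a < ·)).card := by
  rw [filter_gt_image, Finset.card_image_of_injective _ (add_left_injective c)]

/-- the sets of "clusters" with k points below 0 and l above, containing 0 -/
def SKL (k l : ℕ) : Set (Finset ℤ) :=
  {A | 0 ∈ A ∧ (A.filter (· < 0)).card = k ∧ (A.filter (0 < ·)).card = l}

noncomputable def pivot (A : Finset ℤ) (l : ℕ) : ℤ :=
  if h : ∃ a ∈ A, (A.filter (· < a)).card = l then h.choose else 0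

lemma pivot_spec {A : Finset ℤ} {l : ℕ} (h : l < A.card) :
    pivot A l ∈ A ∧ (A.filter (· < pivot A l)).card = l := by
  have hex : ∃ a ∈ A, (A.filter (· < a)).card = l := rank_exists A l h
  rw [pivot, dif_pos hex]
  exact ⟨hex.choose_spec.1, hex.choose_spec.2⟩

lemma SKL_card {A : Finset ℤ} {k l : ℕ} (hA : A ∈ SKL k l) : A.card = k + 1 + l := by
  obtain ⟨h0, hk, hl⟩ := hA
  have := card_split h0
  omega

noncomputable def phiKL (A : Finset ℤ) (l : ℕ) : Finset ℤ :=
  A.image (· + (-(pivot A l)))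

lemma phiKL_mem {A : Finset ℤ} {k l : ℕ} (hA : A ∈ SKL k l) : phiKL A l ∈ SKL l k := by
  have hcard := SKL_card hA
  have hl : l < A.card := by omega
  obtain ⟨hpmem, hpcard⟩ := pivot_spec hl
  set a := pivot A l with ha
  have hgt : (A.filter (a < ·)).card = k := by
    have := card_split hpmem
    omega
  refine ⟨?_, ?_, ?_⟩
  · rw [phiKL, Finset.mem_image]
    exact ⟨a, hpmem, by ring⟩
  · rw [phiKL]
    have hcl := card_filter_lt_image A (-a) a
    have he : a + -a = (0:ℤ) := by ring
    rw [he] at hcl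
    rw [hcl]
    exact hpcard
  · rw [phiKL]
    have hcl := card_filter_gt_image A (-a) a
    have he : a + -a = (0:ℤ) := by ring
    rw [he] at hcl
    rw [hcl]
    exact hgt

lemma pivot_phiKL {A : Finset ℤ} {k l : ℕ} (hA : A ∈ SKL k l) :
    pivot (phiKL A l) k = -(pivot A l) := by
  have hcard := SKL_card hA
  have hl : l < A.card := by omega
  obtain ⟨hpmem, hpcard⟩ := pivot_spec hl
  have hB : phiKL A l ∈ SKL l k := phiKL_mem hA
  have hcardB : (phiKL A l).card = l + 1 + k := SKL_card hB
  have hk : k < (phiKL A l).card := by omega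
  obtain ⟨hqmem, hqcard⟩ := pivot_spec hk
  -- -(pivot A l) also has rank k in phiKL A l
  have hmem : -(pivot A l) ∈ phiKL A l := by
    rw [phiKL, Finset.mem_image]
    exact ⟨0, hA.1, by ring⟩
  have hcard' : ((phiKL A l).filter (· < -(pivot A l))).card = k := by
    rw [phiKL]
    have hcl := card_filter_lt_image A (-(pivot A l)) 0
    have he : (0:ℤ) + -(pivot A l) = -(pivot A l) := by ring
    rw [he] at hcl
    rw [hcl]
    exact hA.2.1
  exact rank_unique hqmem hmem (by rw [hqcard, hcard'])

lemma phiKL_involutive {A : Finset ℤ} {k l : ℕ} (hA : A ∈ SKL k l) :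
    phiKL (phiKL A l) k = A := by
  rw [phiKL, pivot_phiKL hA, neg_neg, phiKL]
  ext b
  simp only [Finset.mem_image]
  constructor
  · rintro ⟨c, ⟨t, ht, rfl⟩, rfl⟩
    have he : t + -(pivot A l) + pivot A l = t := by ring
    rwa [he]
  · intro hb
    exact ⟨b + -(pivot A l), ⟨b, hb, rfl⟩, by ring⟩

noncomputable def sklEquiv (k l : ℕ) : {A : Finset ℤ // A ∈ SKL k l} ≃ {A : Finset ℤ // A ∈ SKL l k} where
  toFun A := ⟨phiKL A.1 l, phiKL_mem A.2⟩
  invFun B := ⟨phiKL B.1 k, phiKL_mem B.2⟩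
  left_inv A := Subtype.ext (phiKL_involutive A.2)
  right_inv B := Subtype.ext (phiKL_involutive B.2)

def RKL (l : ℕ) : Set (Finset ℤ) :=
  {B | 0 ∈ B ∧ (∀ b ∈ B, 0 ≤ b) ∧ (B.filter (0 < ·)).card = l}

def LKL (l : ℕ) : Set (Finset ℤ) :=
  {C | 0 ∈ C ∧ (∀ c ∈ C, c ≤ 0) ∧ (C.filter (· < 0)).card = l}

lemma card_RKL {B : Finset ℤ} {l : ℕ} (hB : B ∈ RKL l) : B.card = l + 1 := by
  obtain ⟨h0, hpos, hcard⟩ := hB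
  have herase : B.filter (0 < ·) = B.erase 0 := by
    ext t
    simp only [Finset.mem_filter, Finset.mem_erase]
    constructor
    · rintro ⟨ht, h⟩; exact ⟨by omega, ht⟩
    · rintro ⟨hne, ht⟩; exact ⟨ht, lt_of_le_of_ne (hpos t ht) (Ne.symm hne)⟩
  rw [herase, Finset.card_erase_of_mem h0] at hcard
  have hpos' : 0 < B.card := Finset.card_pos.mpr ⟨0, h0⟩
  omega

lemma card_LKL {C : Finset ℤ} {l : ℕ} (hC : C ∈ LKL l) : C.card = l + 1 := by
  obtain ⟨h0, hneg, hcard⟩ := hC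
  have herase : C.filter (· < 0) = C.erase 0 := by
    ext t
    simp only [Finset.mem_filter, Finset.mem_erase]
    constructor
    · rintro ⟨ht, h⟩; exact ⟨by omega, ht⟩
    · rintro ⟨hne, ht⟩; exact ⟨ht, lt_of_le_of_ne (hneg t ht) hne⟩
  rw [herase, Finset.card_erase_of_mem h0] at hcard
  have hpos' : 0 < C.card := Finset.card_pos.mpr ⟨0, h0⟩
  omega

lemma min'_image_add (A : Finset ℤ) (hA : A.Nonempty) (c : ℤ) :
    (A.image (· + c)).min' (hA.image (· + c)) = A.min' hA + c := by
  apply le_antisymm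
  · exact Finset.min'_le (A.image (· + c)) _
      (Finset.mem_image.mpr ⟨A.min' hA, A.min'_mem hA, rfl⟩)
  · apply Finset.le_min'
    rintro y hy
    obtain ⟨t, ht, rfl⟩ := Finset.mem_image.mp hy
    have := A.min'_le t ht
    omega

lemma max'_image_add (A : Finset ℤ) (hA : A.Nonempty) (c : ℤ) :
    (A.image (· + c)).max' (hA.image (· + c)) = A.max' hA + c := by
  apply le_antisymm
  · apply Finset.max'_le
    rintro y hy
    obtain ⟨t, ht, rfl⟩ := Finset.mem_image.mp hy
    have := A.le_max' t ht
    omega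
  · exact Finset.le_max' (A.image (· + c)) _
      (Finset.mem_image.mpr ⟨A.max' hA, A.max'_mem hA, rfl⟩)

lemma min'_RKL {B : Finset ℤ} {l : ℕ} (hB : B ∈ RKL l) :
    B.min' ⟨0, hB.1⟩ = 0 :=
  le_antisymm (Finset.min'_le _ _ hB.1) (hB.2.1 _ (Finset.min'_mem _ _))

lemma max'_LKL {C : Finset ℤ} {l : ℕ} (hC : C ∈ LKL l) :
    C.max' ⟨0, hC.1⟩ = 0 :=
  le_antisymm (hC.2.1 _ (Finset.max'_mem _ _)) (Finset.le_max' _ _ hC.1)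

noncomputable def toL (B : Finset ℤ) : Finset ℤ :=
  if h : B.Nonempty then B.image (· + (-(B.max' h))) else B

noncomputable def toR (C : Finset ℤ) : Finset ℤ :=
  if h : C.Nonempty then C.image (· + (-(C.min' h))) else C

lemma toL_eq {B : Finset ℤ} (h : B.Nonempty) : toL B = B.image (· + (-(B.max' h))) := dif_pos h

lemma toR_eq {C : Finset ℤ} (h : C.Nonempty) : toR C = C.image (· + (-(C.min' h))) := dif_pos h

lemma toL_mem {B : Finset ℤ} {l : ℕ} (hB : B ∈ RKL l) : toL B ∈ LKL l := by
  have hne : B.Nonempty := ⟨0, hB.1⟩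
  rw [toL_eq hne]
  set b := B.max' hne with hb
  refine ⟨Finset.mem_image.mpr ⟨b, B.max'_mem hne, by ring⟩, ?_, ?_⟩
  · rintro c hc
    obtain ⟨t, ht, rfl⟩ := Finset.mem_image.mp hc
    have := B.le_max' t ht
    omega
  · -- card of (image).filter (· < 0) = l
    have herase : (B.image (· + (-b))).filter (· < 0) = (B.image (· + (-b))).erase 0 := by
      ext t
      simp only [Finset.mem_filter, Finset.mem_erase]
      constructor
      · rintro ⟨ht, h⟩; exact ⟨by omega, ht⟩
      · rintro ⟨hne', ht⟩
        obtain ⟨s, hs, rfl⟩ := Finset.mem_image.mp ht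
        have := B.le_max' s hs
        refine ⟨ht, ?_⟩
        rcases lt_or_eq_of_le this with h' | h'
        · omega
        · exfalso; apply hne'; omega
    rw [herase, Finset.card_erase_of_mem (Finset.mem_image.mpr ⟨b, B.max'_mem hne, by ring⟩),
      Finset.card_image_of_injective _ (add_left_injective _), card_RKL hB]
    omega

lemma toR_mem {C : Finset ℤ} {l : ℕ} (hC : C ∈ LKL l) : toR C ∈ RKL l := by
  have hne : C.Nonempty := ⟨0, hC.1⟩
  rw [toR_eq hne]
  set c := C.min' hne with hc
  refine ⟨Finset.mem_image.mpr ⟨c, C.min'_mem hne, by ring⟩, ?_, ?_⟩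
  · rintro b hb
    obtain ⟨t, ht, rfl⟩ := Finset.mem_image.mp hb
    have := C.min'_le t ht
    omega
  · have herase : (C.image (· + (-c))).filter (0 < ·) = (C.image (· + (-c))).erase 0 := by
      ext t
      simp only [Finset.mem_filter, Finset.mem_erase]
      constructor
      · rintro ⟨ht, h⟩; exact ⟨by omega, ht⟩
      · rintro ⟨hne', ht⟩
        obtain ⟨s, hs, rfl⟩ := Finset.mem_image.mp ht
        have := C.min'_le s hs
        refine ⟨ht, ?_⟩
        rcases lt_or_eq_of_le this with h' | h'
        · omega
        · exfalso; apply hne'; omega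
    rw [herase, Finset.card_erase_of_mem (Finset.mem_image.mpr ⟨c, C.min'_mem hne, by ring⟩),
      Finset.card_image_of_injective _ (add_left_injective _), card_LKL hC]
    omega

lemma image_add_add (A : Finset ℤ) (c d : ℤ) :
    (A.image (· + c)).image (· + d) = A.image (· + (c + d)) := by
  rw [Finset.image_image]
  apply Finset.image_congr
  intro t _
  simp only [Function.comp_apply]
  ring

lemma image_add_zero (A : Finset ℤ) : A.image (· + 0) = A := by
  have : (fun t : ℤ => t + 0) = id := by funext t; simp
  rw [this, Finset.image_id]

lemma toR_toL {B : Finset ℤ} {l : ℕ} (hB : B ∈ RKL l) : toR (toL B) = B := by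
  have hne : B.Nonempty := ⟨0, hB.1⟩
  have hLmem := toL_mem hB
  have hLne : (toL B).Nonempty := ⟨0, hLmem.1⟩
  rw [toR_eq hLne]
  have hmin : (toL B).min' hLne = -(B.max' hne) := by
    apply le_antisymm
    · apply Finset.min'_le
      rw [toL_eq hne]
      exact Finset.mem_image.mpr ⟨0, hB.1, by ring⟩
    · apply Finset.le_min'
      intro y hy
      rw [toL_eq hne] at hy
      obtain ⟨t, ht, rfl⟩ := Finset.mem_image.mp hy
      have := hB.2.1 t ht
      omega
  rw [hmin, neg_neg, toL_eq hne, image_add_add]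
  simp [image_add_zero]

lemma toL_toR {C : Finset ℤ} {l : ℕ} (hC : C ∈ LKL l) : toL (toR C) = C := by
  have hne : C.Nonempty := ⟨0, hC.1⟩
  have hRmem := toR_mem hC
  have hRne : (toR C).Nonempty := ⟨0, hRmem.1⟩
  rw [toL_eq hRne]
  have hmax : (toR C).max' hRne = -(C.min' hne) := by
    apply le_antisymm
    · apply Finset.max'_le
      intro y hy
      rw [toR_eq hne] at hy
      obtain ⟨t, ht, rfl⟩ := Finset.mem_image.mp hy
      have := hC.2.1 t ht
      omega
    · apply Finset.le_max'
      rw [toR_eq hne]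
      exact Finset.mem_image.mpr ⟨0, hC.1, by ring⟩
  rw [hmax, neg_neg, toR_eq hne, image_add_add]
  simp [image_add_zero]

noncomputable def rlEquiv (l : ℕ) : {B : Finset ℤ // B ∈ RKL l} ≃ {C : Finset ℤ // C ∈ LKL l} where
  toFun B := ⟨toL B.1, toL_mem B.2⟩
  invFun C := ⟨toR C.1, toR_mem C.2⟩
  left_inv B := Subtype.ext (toR_toL B.2)
  right_inv C := Subtype.ext (toL_toR C.2)

section Abstract
variable (μ : Measure Path) [IsProbabilityMeasure μ]
  (h0 : μ (coordT 0) = 1)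
  (hsh : ∀ (F : Finset ℤ) (ε : ℤ → Bool) (a : ℤ), 0 ∈ F → a ∈ F → ε 0 = true →
    ε a = true → μ (cylC F ε) = μ (shift (-a) ⁻¹' cylC F ε))

include hsh in
lemma master0 (a : ℤ) {E : Set Path} (hE : MeasurableSet E) :
    μ (E ∩ (coordT 0 ∩ coordT a)) = μ (shift (-a) ⁻¹' (E ∩ (coordT 0 ∩ coordT a))) := by
  classical
  set K := coordT 0 ∩ coordT a with hK
  have hKmeas : MeasurableSet K :=
    (measurableSet_coordT 0).inter (measurableSet_coordT a)
  have hτ : Measurable (shift (-a)) := measurable_shift (-a)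
  -- key claim on cylinders
  have key : ∀ F ε, μ (cylC F ε ∩ K) = μ (shift (-a) ⁻¹' (cylC F ε ∩ K)) := by
    intro F ε
    by_cases hcompat : ∀ t ∈ F, (t = 0 ∨ t = a) → ε t = true
    · have heq : cylC F ε ∩ K = cylC (insert 0 (insert a F))
          (fun t => if t = 0 ∨ t = a then true else ε t) := by
        ext x
        simp only [cylC, hK, coordT, Set.mem_inter_iff, Set.mem_setOf_eq,
          Finset.mem_insert]
        constructor
        · rintro ⟨hx, hx0, hxa⟩ t ht
          by_cases h' : t = 0 ∨ t = a
          · have hxt : x t = true := by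
              rcases h' with h | h
              · rw [h]; exact hx0
              · rw [h]; exact hxa
            rw [if_pos h', hxt]
          · rcases ht with rfl | rfl | ht
            · exact absurd (Or.inl rfl) h'
            · exact absurd (Or.inr rfl) h'
            · simp [h', hx t ht]
        · intro h
          refine ⟨?_, ?_, ?_⟩
          · intro t ht
            have := h t (Or.inr (Or.inr ht))
            by_cases h' : t = 0 ∨ t = a
            · rw [this, if_pos h', hcompat t ht h']
            · rwa [if_neg h'] at this
          · have := h 0 (Or.inl rfl); simpa using this
          · have := h a (Or.inr (Or.inl rfl)); simpa using this
      rw [heq]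
      exact hsh _ _ a (Finset.mem_insert_self 0 _)
        (Finset.mem_insert_of_mem (Finset.mem_insert_self a F))
        (by simp) (by simp)
    · push_neg at hcompat
      obtain ⟨t, htF, ht0a, htε⟩ := hcompat
      have heq : cylC F ε ∩ K = (∅ : Set Path) := by
        rw [Set.eq_empty_iff_forall_notMem]
        rintro x ⟨hx, hxK⟩
        have hx0 : x 0 = true := hxK.1
        have hxa : x a = true := hxK.2
        have hxt : x t = true := by
          rcases ht0a with h | h
          · rw [h]; exact hx0
          · rw [h]; exact hxa
        have hxe : x t = ε t := hx t htF
        rw [hxe] at hxt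
        exact htε hxt
      rw [heq]
      simp
  -- two finite measures agreeing on the π-system
  set ν₁ := μ.restrict K with hν₁
  set ν₂ := (μ.restrict (shift (-a) ⁻¹' K)).map (shift (-a)) with hν₂
  have hν : ν₁ = ν₂ := by
    refine ext_of_generate_finite CylSet generateFrom_cylSet isPiSystem_cylSet ?_ ?_
    · rintro s ⟨F, ε, rfl⟩
      rw [hν₁, hν₂, Measure.restrict_apply (measurableSet_cylC F ε),
        Measure.map_apply hτ (measurableSet_cylC F ε),
        Measure.restrict_apply (hτ (measurableSet_cylC F ε)),
        ← Set.preimage_inter]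
      exact key F ε
    · rw [hν₁, hν₂, Measure.restrict_apply MeasurableSet.univ,
        Measure.map_apply hτ MeasurableSet.univ,
        Measure.restrict_apply (hτ MeasurableSet.univ)]
      simp only [Set.univ_inter, Set.preimage_univ]
      have := key ∅ (fun _ => true)
      simpa [cylC, Set.univ_inter] using this
  have h1 : μ (E ∩ K) = ν₁ E := (Measure.restrict_apply hE).symm
  have h2 : ν₂ E = μ (shift (-a) ⁻¹' (E ∩ K)) := by
    rw [hν₂, Measure.map_apply hτ hE, Measure.restrict_apply (hτ hE),
      ← Set.preimage_inter]
  rw [h1, hν, h2]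

include h0 in
lemma inter_coord0 (S : Set Path) : μ (S ∩ coordT 0) = μ S := by
  refine measure_inter_conull ?_
  rw [prob_compl_eq_zero_iff (measurableSet_coordT 0)]
  exact h0

include h0 hsh in
lemma master (a : ℤ) {E : Set Path} (hE : MeasurableSet E) :
    μ (E ∩ coordT a) = μ (shift (-a) ⁻¹' E ∩ coordT (-a)) := by
  have e1 : E ∩ (coordT 0 ∩ coordT a) = (E ∩ coordT a) ∩ coordT 0 := by
    rw [Set.inter_comm (coordT 0), Set.inter_assoc]
  have e2 : shift (-a) ⁻¹' (E ∩ (coordT 0 ∩ coordT a))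
      = (shift (-a) ⁻¹' E ∩ coordT (-a)) ∩ coordT 0 := by
    rw [Set.preimage_inter, Set.preimage_inter, shift_preimage_coordT,
      shift_preimage_coordT]
    simp only [zero_add, add_neg_cancel]
    rw [Set.inter_comm (coordT (-a)), Set.inter_assoc]
    rw [Set.inter_comm (coordT 0)]
  calc μ (E ∩ coordT a) = μ ((E ∩ coordT a) ∩ coordT 0) := (inter_coord0 μ h0 _).symm
    _ = μ (E ∩ (coordT 0 ∩ coordT a)) := by rw [e1]
    _ = μ (shift (-a) ⁻¹' (E ∩ (coordT 0 ∩ coordT a))) := master0 μ hsh a hE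
    _ = μ ((shift (-a) ⁻¹' E ∩ coordT (-a)) ∩ coordT 0) := by rw [e2]
    _ = μ (shift (-a) ⁻¹' E ∩ coordT (-a)) := inter_coord0 μ h0 _

include h0 hsh in
lemma full_shift {A : Finset ℤ} (h0A : (0:ℤ) ∈ A) {a : ℤ} (haA : a ∈ A) :
    μ (FullSet A) = μ (FullSet (A.image (· + (-a)))) := by
  have h1 : FullSet A ∩ coordT a = FullSet A := by
    refine Set.inter_eq_left.mpr fun x hx => ?_
    show x a = true
    rw [hx a]
    simp [haA]
  have h3 : FullSet (A.image (· + (-a))) ∩ coordT (-a) = FullSet (A.image (· + (-a))) := by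
    refine Set.inter_eq_left.mpr fun x hx => ?_
    show x (-a) = true
    rw [hx (-a)]
    simp only [decide_eq_true_eq, Finset.mem_image]
    exact ⟨0, h0A, by ring⟩
  calc μ (FullSet A) = μ (FullSet A ∩ coordT a) := by rw [h1]
    _ = μ (shift (-a) ⁻¹' FullSet A ∩ coordT (-a)) :=
        master μ h0 hsh a (measurableSet_FullSet A)
    _ = μ (FullSet (A.image (· + (-a)))) := by
        rw [shift_preimage_FullSet, h3]

include h0 hsh in
lemma right_shift {B : Finset ℤ} {m : ℤ} (hm : ∀ b ∈ B, m ≤ b) (h0B : (0:ℤ) ∈ B)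
    {a : ℤ} (haB : a ∈ B) :
    μ (RightSet B m ∩ InfSet)
      = μ (RightSet (B.image (· + (-a))) (m + (-a)) ∩ InfSet) := by
  have hEmeas : MeasurableSet (RightSet B m ∩ InfSet) :=
    (measurableSet_RightSet B m).inter measurableSet_InfSet
  have h1 : (RightSet B m ∩ InfSet) ∩ coordT a = RightSet B m ∩ InfSet := by
    refine Set.inter_eq_left.mpr fun x hx => ?_
    show x a = true
    rw [hx.1 a (hm a haB)]
    simp [haB]
  have hpre : shift (-a) ⁻¹' (RightSet B m ∩ InfSet)
      = RightSet (B.image (· + (-a))) (m + (-a)) ∩ InfSet := by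
    rw [Set.preimage_inter, shift_preimage_RightSet, shift_preimage_InfSet]
  have h3 : (RightSet (B.image (· + (-a))) (m + (-a)) ∩ InfSet) ∩ coordT (-a)
      = RightSet (B.image (· + (-a))) (m + (-a)) ∩ InfSet := by
    refine Set.inter_eq_left.mpr fun x hx => ?_
    show x (-a) = true
    have hmle : m + (-a) ≤ -a := by
      have := hm 0 h0B
      linarith
    rw [hx.1 (-a) hmle]
    simp only [decide_eq_true_eq, Finset.mem_image]
    exact ⟨0, h0B, by ring⟩
  calc μ (RightSet B m ∩ InfSet)
      = μ ((RightSet B m ∩ InfSet) ∩ coordT a) := by rw [h1]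
    _ = μ (shift (-a) ⁻¹' (RightSet B m ∩ InfSet) ∩ coordT (-a)) :=
        master μ h0 hsh a hEmeas
    _ = μ (RightSet (B.image (· + (-a))) (m + (-a)) ∩ InfSet) := by
        rw [hpre, h3]

include h0 in
lemma h0_reflP : (μ.map reflP) (coordT 0) = 1 := by
  rw [Measure.map_apply measurable_reflP (measurableSet_coordT 0)]
  have h : reflP ⁻¹' coordT 0 = coordT 0 := by
    ext x; simp [reflP, coordT]
  rw [h]; exact h0

include hsh in
lemma hsh_reflP : ∀ (F : Finset ℤ) (ε : ℤ → Bool) (a : ℤ), 0 ∈ F → a ∈ F → ε 0 = true →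
    ε a = true →
    (μ.map reflP) (cylC F ε) = (μ.map reflP) (shift (-a) ⁻¹' cylC F ε) := by
  intro F ε a h0F haF hε0 hεa
  rw [Measure.map_apply measurable_reflP (measurableSet_cylC F ε),
    Measure.map_apply measurable_reflP ((measurable_shift (-a)) (measurableSet_cylC F ε))]
  have hcomm : reflP ⁻¹' (shift (-a) ⁻¹' cylC F ε) = shift a ⁻¹' (reflP ⁻¹' cylC F ε) := by
    ext x
    show shift (-a) (reflP x) ∈ cylC F ε ↔ reflP (shift a x) ∈ cylC F ε
    have hfe : shift (-a) (reflP x) = reflP (shift a x) := by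
      funext t
      show x (-(t + -a)) = x (-t + a)
      congr 1
      ring
    rw [hfe]
  rw [hcomm, refl_preimage_cylC]
  have hres := hsh (F.image Neg.neg) (fun s => ε (-s)) (-a)
    (Finset.mem_image.mpr ⟨0, h0F, neg_zero⟩)
    (Finset.mem_image.mpr ⟨a, haF, rfl⟩)
    (by simpa using hε0)
    (by simpa using hεa)
  rw [neg_neg] at hres
  exact hres

lemma fullSet_smp {A : Finset ℤ} {x : Path} (hx : x ∈ FullSet A) :
    SmP x = ((A.filter (· < 0)).card : ℕ∞) := by
  refine smp_negCyl (fun a ha => (Finset.mem_filter.mp ha).2) ?_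
  intro t ht
  rw [hx t]
  refine decide_eq_decide.mpr ?_
  simp [Finset.mem_filter, ht]

lemma fullSet_spp {A : Finset ℤ} {x : Path} (hx : x ∈ FullSet A) :
    SpP x = ((A.filter (0 < ·)).card : ℕ∞) := by
  refine spp_posCyl (fun a ha => (Finset.mem_filter.mp ha).2) ?_
  intro t ht
  rw [hx t]
  refine decide_eq_decide.mpr ?_
  simp [Finset.mem_filter, ht]

lemma fullSet_disjoint {A B : Finset ℤ} (h : A ≠ B) : Disjoint (FullSet A) (FullSet B) := by
  rw [Set.disjoint_left]
  intro x hxA hxB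
  apply h
  ext t
  have h1 := hxA t
  have h2 := hxB t
  rw [h1] at h2
  exact decide_eq_decide.mp h2

lemma decomp_pair (k l : ℕ) :
    {x : Path | SmP x = (k : ℕ∞) ∧ SpP x = (l : ℕ∞)} ∩ coordT 0
      = ⋃ (A : {A : Finset ℤ // A ∈ SKL k l}), FullSet A.1 := by
  ext x
  simp only [Set.mem_inter_iff, Set.mem_setOf_eq, Set.mem_iUnion]
  constructor
  · rintro ⟨⟨hsm, hsp⟩, hx0⟩
    have hx0' : x 0 = true := hx0
    have hm : {t : ℤ | t < 0 ∧ x t = true}.Finite := Set.finite_of_encard_eq_coe hsm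
    have hp : {t : ℤ | 0 < t ∧ x t = true}.Finite := Set.finite_of_encard_eq_coe hsp
    have hfin : {t : ℤ | x t = true}.Finite := by
      refine ((hm.union ((Set.finite_singleton 0).union hp)).subset ?_)
      intro t ht
      rcases lt_trichotomy t 0 with h | h | h
      · exact Or.inl ⟨h, ht⟩
      · exact Or.inr (Or.inl h)
      · exact Or.inr (Or.inr ⟨h, ht⟩)
    have hxfull : x ∈ FullSet hfin.toFinset := by
      intro t
      by_cases hxt : x t = true
      · simp [hxt, hfin.mem_toFinset.mpr hxt]
      · have : t ∉ hfin.toFinset := fun hmem => hxt (hfin.mem_toFinset.mp hmem)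
        simp [this, Bool.not_eq_true] at hxt ⊢
        exact hxt
    refine ⟨⟨hfin.toFinset, hfin.mem_toFinset.mpr hx0', ?_, ?_⟩, hxfull⟩
    · have := fullSet_smp hxfull
      rw [hsm] at this
      exact_mod_cast this.symm
    · have := fullSet_spp hxfull
      rw [hsp] at this
      exact_mod_cast this.symm
  · rintro ⟨⟨A, hA⟩, hx⟩
    refine ⟨⟨?_, ?_⟩, ?_⟩
    · rw [fullSet_smp hx, hA.2.1]
    · rw [fullSet_spp hx, hA.2.2]
    · show x 0 = true
      rw [hx 0]
      simp [hA.1]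

include h0 hsh in
lemma pair_sym_fin (k l : ℕ) :
    μ {x : Path | SmP x = (k : ℕ∞) ∧ SpP x = (l : ℕ∞)}
      = μ {x : Path | SmP x = (l : ℕ∞) ∧ SpP x = (k : ℕ∞)} := by
  have hdis : ∀ k' l' : ℕ,
      Pairwise (Disjoint on fun (A : {A : Finset ℤ // A ∈ SKL k' l'}) => FullSet A.1) := by
    intro k' l' A B hne
    exact fullSet_disjoint (fun h => hne (Subtype.ext h))
  have hcalc : ∀ k' l' : ℕ, μ {x : Path | SmP x = (k' : ℕ∞) ∧ SpP x = (l' : ℕ∞)}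
      = ∑' (A : {A : Finset ℤ // A ∈ SKL k' l'}), μ (FullSet A.1) := by
    intro k' l'
    rw [← inter_coord0 μ h0 {x : Path | SmP x = (k' : ℕ∞) ∧ SpP x = (l' : ℕ∞)},
      decomp_pair k' l',
      measure_iUnion (hdis k' l') (fun A => measurableSet_FullSet A.1)]
  rw [hcalc k l, hcalc l k]
  rw [← Equiv.tsum_eq (sklEquiv k l) (fun B => μ (FullSet B.1))]
  refine tsum_congr fun A => ?_
  show μ (FullSet A.1) = μ (FullSet (phiKL A.1 l))
  have hcard := SKL_card A.2
  have hl : l < A.1.card := by omega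
  obtain ⟨hpmem, _⟩ := pivot_spec hl
  exact full_shift μ h0 hsh A.2.1 hpmem

lemma filter_ge_eq_insert {A : Finset ℤ} {a : ℤ} (ha : a ∈ A) :
    A.filter (a ≤ ·) = insert a (A.filter (a < ·)) := by
  ext b
  simp only [Finset.mem_filter, Finset.mem_insert]
  constructor
  · rintro ⟨hb, hba⟩
    rcases lt_or_eq_of_le hba with h | h
    · exact Or.inr ⟨hb, h⟩
    · exact Or.inl h.symm
  · rintro (rfl | ⟨hb, hba⟩)
    · exact ⟨ha, le_refl _⟩
    · exact ⟨hb, le_of_lt hba⟩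

lemma min'_toL {B : Finset ℤ} {l : ℕ} (hB : B ∈ RKL l) :
    (toL B).min' ⟨0, (toL_mem hB).1⟩ = -(B.max' ⟨0, hB.1⟩) := by
  have hne : B.Nonempty := ⟨0, hB.1⟩
  apply le_antisymm
  · apply Finset.min'_le
    rw [toL_eq hne]
    exact Finset.mem_image.mpr ⟨0, hB.1, by ring⟩
  · apply Finset.le_min'
    intro y hy
    rw [toL_eq hne] at hy
    obtain ⟨t, ht, rfl⟩ := Finset.mem_image.mp hy
    have := hB.2.1 t ht
    omega

lemma rightSet_disjoint_R {l : ℕ} {B B' : Finset ℤ} (hB : B ∈ RKL l) (hB' : B' ∈ RKL l)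
    (h : B ≠ B') : Disjoint (RightSet B 0 ∩ InfSet) (RightSet B' 0 ∩ InfSet) := by
  rw [Set.disjoint_left]
  rintro x ⟨hxB, _⟩ ⟨hxB', _⟩
  apply h
  ext t
  by_cases ht : (0:ℤ) ≤ t
  · have h1 := hxB t ht
    have h2 := hxB' t ht
    rw [h1] at h2
    exact decide_eq_decide.mp h2
  · constructor
    · intro hmem; exact absurd (hB.2.1 t hmem) ht
    · intro hmem; exact absurd (hB'.2.1 t hmem) ht

lemma rightSet_subset_of_le {C C' : Finset ℤ} {m m' : ℤ} {x : Path}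
    (hxC : x ∈ RightSet C m) (hxC' : x ∈ RightSet C' m') (hmm : m ≤ m')
    (hC' : ∀ c ∈ C', m' ≤ c) : C' ⊆ C := by
  intro t ht
  have htm : m' ≤ t := hC' t ht
  have h2 := hxC' t htm
  have h1 := hxC t (le_trans hmm htm)
  have hxt : x t = true := by rw [h2]; simp [ht]
  rw [hxt] at h1
  exact of_decide_eq_true h1.symm

lemma rightSet_disjoint_L {l : ℕ} {C C' : Finset ℤ} (hC : C ∈ LKL l) (hC' : C' ∈ LKL l)
    (h : C ≠ C') :
    Disjoint (RightSet C (C.min' ⟨0, hC.1⟩) ∩ InfSet)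
      (RightSet C' (C'.min' ⟨0, hC'.1⟩) ∩ InfSet) := by
  rw [Set.disjoint_left]
  rintro x ⟨hxC, _⟩ ⟨hxC', _⟩
  apply h
  have hcard : C.card = C'.card := by rw [card_LKL hC, card_LKL hC']
  rcases le_total (C.min' ⟨0, hC.1⟩) (C'.min' ⟨0, hC'.1⟩) with hle | hle
  · have hsub : C' ⊆ C :=
      rightSet_subset_of_le hxC hxC' hle (fun c hc => Finset.min'_le _ _ hc)
    exact (Finset.eq_of_subset_of_card_le hsub hcard.le).symm
  · have hsub : C ⊆ C' :=
      rightSet_subset_of_le hxC' hxC hle (fun c hc => Finset.min'_le _ _ hc)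
    exact Finset.eq_of_subset_of_card_le hsub hcard.ge

lemma decompR (l : ℕ) :
    {x : Path | SpP x = (l : ℕ∞) ∧ SmP x = ⊤} ∩ coordT 0
      = ⋃ (B : {B : Finset ℤ // B ∈ RKL l}), (RightSet B.1 0 ∩ InfSet) := by
  ext x
  simp only [Set.mem_inter_iff, Set.mem_setOf_eq, Set.mem_iUnion]
  constructor
  · rintro ⟨⟨hsp, hsm⟩, hx0⟩
    have hx0' : x 0 = true := hx0
    have hp : {t : ℤ | 0 < t ∧ x t = true}.Finite := Set.finite_of_encard_eq_coe hsp
    have hBfin : {t : ℤ | 0 ≤ t ∧ x t = true}.Finite := by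
      refine ((Set.finite_singleton 0).union hp).subset ?_
      rintro t ⟨ht, hxt⟩
      rcases eq_or_lt_of_le ht with h | h
      · exact Or.inl (by simp [← h])
      · exact Or.inr ⟨h, hxt⟩
    have hmemB : ∀ t, t ∈ hBfin.toFinset ↔ (0 ≤ t ∧ x t = true) := fun t => hBfin.mem_toFinset
    have hxR : x ∈ RightSet hBfin.toFinset 0 := by
      intro t ht
      by_cases hxt : x t = true
      · simp [hxt, (hmemB t).mpr ⟨ht, hxt⟩]
      · have hnm : t ∉ hBfin.toFinset := fun hm => hxt ((hmemB t).mp hm).2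
        simp [hnm, Bool.not_eq_true] at hxt ⊢
        exact hxt
    have hInf : x ∈ InfSet := by
      have hneg : {t : ℤ | t < 0 ∧ x t = true}.Infinite := by
        by_contra hfin
        rw [Set.not_infinite] at hfin
        exact (Set.encard_ne_top_iff.mpr hfin) hsm
      exact hneg.mono (fun t ht => ht.2)
    refine ⟨⟨hBfin.toFinset, ?_, ?_, ?_⟩, hxR, hInf⟩
    · exact (hmemB 0).mpr ⟨le_refl 0, hx0'⟩
    · intro b hb; exact ((hmemB b).mp hb).1
    · have hseteq : ((hBfin.toFinset.filter (0 < ·)) : Set ℤ) = {t : ℤ | 0 < t ∧ x t = true} := by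
        ext t
        simp only [Finset.coe_filter, Set.mem_setOf_eq, hmemB]
        constructor
        · rintro ⟨⟨_, h2⟩, h3⟩; exact ⟨h3, h2⟩
        · rintro ⟨h1, h2⟩; exact ⟨⟨le_of_lt h1, h2⟩, h1⟩
      have henc := Set.encard_coe_eq_coe_finsetCard (hBfin.toFinset.filter (0 < ·))
      rw [hseteq] at henc
      have henc' : ((l:ℕ∞)) = ((hBfin.toFinset.filter (0 < ·)).card : ℕ∞) := by
        rw [← hsp]; exact henc
      exact_mod_cast henc'.symm
  · rintro ⟨⟨B, hB⟩, hxR, hInf⟩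
    have hx0' : x 0 = true := by
      rw [hxR 0 (le_refl 0)]
      simp [hB.1]
    refine ⟨⟨?_, ?_⟩, hx0'⟩
    · have hxP : x ∈ PosCyl (B.filter (0 < ·)) := by
        intro t ht
        rw [hxR t (le_of_lt ht)]
        refine decide_eq_decide.mpr ?_
        simp [Finset.mem_filter, ht]
      rw [spp_posCyl (fun a ha => (Finset.mem_filter.mp ha).2) hxP, hB.2.2]
    · have hrest : {t : ℤ | 0 ≤ t ∧ x t = true}.Finite := by
        refine B.finite_toSet.subset ?_
        rintro t ⟨ht, hxt⟩
        have h1 := hxR t ht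
        rw [hxt] at h1
        exact of_decide_eq_true h1.symm
      have hneg : {t : ℤ | t < 0 ∧ x t = true}.Infinite := by
        refine (hInf.diff hrest).mono ?_
        rintro t ⟨hxt, hnt⟩
        simp only [Set.mem_setOf_eq, not_and] at hnt
        refine ⟨?_, hxt⟩
        by_contra hge
        push_neg at hge
        exact (hnt hge) hxt
      exact Set.encard_eq_top hneg

lemma decompL (l : ℕ) :
    {x : Path | SpP x = ((0 : ℕ) : ℕ∞) ∧ SmP x = ⊤} ∩ coordT 0
      = ⋃ (C : {C : Finset ℤ // C ∈ LKL l}),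
          (RightSet C.1 (C.1.min' ⟨0, C.2.1⟩) ∩ InfSet) := by
  ext x
  simp only [Set.mem_inter_iff, Set.mem_setOf_eq, Set.mem_iUnion]
  constructor
  · rintro ⟨⟨hsp, hsm⟩, hx0⟩
    have hx0' : x 0 = true := hx0
    -- no positive points
    have hposempty : {t : ℤ | 0 < t ∧ x t = true} = ∅ := by
      rw [← Set.encard_eq_zero]
      exact_mod_cast hsp
    have hT0 : ∀ t, x t = true → t ≤ 0 := by
      intro t hxt
      by_contra hgt
      push_neg at hgt
      have : t ∈ {t : ℤ | 0 < t ∧ x t = true} := ⟨hgt, hxt⟩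
      rw [hposempty] at this
      exact this
    have hTinf : {t : ℤ | x t = true}.Infinite := by
      have hneg : {t : ℤ | t < 0 ∧ x t = true}.Infinite := by
        by_contra hfin
        rw [Set.not_infinite] at hfin
        exact (Set.encard_ne_top_iff.mpr hfin) hsm
      exact hneg.mono (fun t ht => ht.2)
    obtain ⟨F, hFsub, hFcard⟩ := hTinf.exists_subset_card_eq (l + 1)
    have hFne : F.Nonempty := Finset.card_pos.mp (by omega)
    set a := F.min' hFne with ha
    have hGfin : ({t : ℤ | x t = true} ∩ Set.Icc a 0).Finite :=
      (Set.finite_Icc a 0).inter_of_right _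
    set G := hGfin.toFinset with hG
    have hmemG : ∀ t, t ∈ G ↔ (x t = true ∧ a ≤ t ∧ t ≤ 0) := by
      intro t
      rw [hG, hGfin.mem_toFinset]
      simp [Set.mem_Icc]
    have hFG : F ⊆ G := by
      intro f hf
      rw [hmemG]
      have hfx : x f = true := hFsub hf
      exact ⟨hfx, F.min'_le f hf, hT0 f hfx⟩
    have hGcard : l + 1 ≤ G.card := hFcard ▸ Finset.card_le_card hFG
    have hj : G.card - 1 - l < G.card := by omega
    obtain ⟨g, hgG, hgcard⟩ := rank_exists G (G.card - 1 - l) hj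
    have hgtcard : (G.filter (g < ·)).card = l := by
      have := card_split hgG
      omega
    have hgx : x g = true := ((hmemG g).mp hgG).1
    set C := G.filter (g ≤ ·) with hC
    have hmemC : ∀ t, t ∈ C ↔ (x t = true ∧ g ≤ t) := by
      intro t
      rw [hC, Finset.mem_filter, hmemG]
      constructor
      · rintro ⟨⟨h1, _, _⟩, h4⟩; exact ⟨h1, h4⟩
      · rintro ⟨h1, h2⟩
        have hga : a ≤ g := ((hmemG g).mp hgG).2.1
        exact ⟨⟨h1, le_trans hga h2, hT0 t h1⟩, h2⟩
    have hgC : g ∈ C := (hmemC g).mpr ⟨hgx, le_refl g⟩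
    have h0C : (0:ℤ) ∈ C := (hmemC 0).mpr ⟨hx0', hT0 g hgx⟩
    have hCcard : C.card = l + 1 := by
      rw [hC, filter_ge_eq_insert hgG,
        Finset.card_insert_of_notMem (fun hmem => lt_irrefl g (Finset.mem_filter.mp hmem).2),
        hgtcard]
    have hCLKL : C ∈ LKL l := by
      refine ⟨h0C, ?_, ?_⟩
      · intro c hc; exact hT0 c ((hmemC c).mp hc).1
      · have herase : C.filter (· < 0) = C.erase 0 := by
          ext t
          simp only [Finset.mem_filter, Finset.mem_erase]
          constructor
          · rintro ⟨ht, hlt⟩; exact ⟨by omega, ht⟩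
          · rintro ⟨hne, ht⟩
            exact ⟨ht, lt_of_le_of_ne (hT0 t ((hmemC t).mp ht).1) hne⟩
        rw [herase, Finset.card_erase_of_mem h0C, hCcard]
        omega
    have hminC : C.min' ⟨0, hCLKL.1⟩ = g :=
      le_antisymm (Finset.min'_le _ _ hgC)
        (Finset.le_min' _ _ _ (fun y hy => ((hmemC y).mp hy).2))
    refine ⟨⟨C, hCLKL⟩, ?_, hTinf⟩
    show x ∈ RightSet C (C.min' ⟨0, hCLKL.1⟩)
    rw [hminC]
    intro t ht
    by_cases hxt : x t = true
    · simp [hxt, (hmemC t).mpr ⟨hxt, ht⟩]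
    · have hnm : t ∉ C := fun hm => hxt ((hmemC t).mp hm).1
      simp [hnm, Bool.not_eq_true] at hxt ⊢
      exact hxt
  · rintro ⟨⟨C, hC⟩, hxR, hInf⟩
    set m := C.min' ⟨0, hC.1⟩ with hm
    have hm0 : m ≤ 0 := Finset.min'_le _ _ hC.1
    have hx0' : x 0 = true := by
      rw [hxR 0 hm0]
      simp [hC.1]
    refine ⟨⟨?_, ?_⟩, hx0'⟩
    · have hempty : {t : ℤ | 0 < t ∧ x t = true} = ∅ := by
        rw [Set.eq_empty_iff_forall_notMem]
        rintro t ⟨ht, hxt⟩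
        have h1 := hxR t (by omega)
        rw [hxt] at h1
        have : t ∈ C := of_decide_eq_true h1.symm
        have := hC.2.1 t this
        omega
      show SpP x = ((0 : ℕ) : ℕ∞)
      simp only [SpP]
      rw [hempty]
      simp
    · have hrest : {t : ℤ | m ≤ t ∧ x t = true}.Finite := by
        refine C.finite_toSet.subset ?_
        rintro t ⟨ht, hxt⟩
        have h1 := hxR t ht
        rw [hxt] at h1
        exact of_decide_eq_true h1.symm
      have hneg : {t : ℤ | t < 0 ∧ x t = true}.Infinite := by
        refine (hInf.diff hrest).mono ?_
        rintro t ⟨hxt, hnt⟩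
        simp only [Set.mem_setOf_eq, not_and] at hnt
        refine ⟨?_, hxt⟩
        by_contra hge
        push_neg at hge
        exact (hnt (le_trans hm0 hge)) hxt
      exact Set.encard_eq_top hneg

lemma measurableSet_pair (k l : ℕ∞) :
    MeasurableSet {x : Path | SmP x = k ∧ SpP x = l} := by
  have h : {x : Path | SmP x = k ∧ SpP x = l}
      = {x : Path | SmP x = k} ∩ {x : Path | SpP x = l} := rfl
  rw [h]
  exact (measurableSet_SmP_eq k).inter (measurableSet_SpP_eq l)

lemma measurableSet_pairPS (l k : ℕ∞) :
    MeasurableSet {x : Path | SpP x = l ∧ SmP x = k} := by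
  have h : {x : Path | SpP x = l ∧ SmP x = k}
      = {x : Path | SpP x = l} ∩ {x : Path | SmP x = k} := rfl
  rw [h]
  exact (measurableSet_SpP_eq l).inter (measurableSet_SmP_eq k)

include h0 hsh in
lemma spp_inf_const (l : ℕ) :
    μ ({x : Path | SpP x = (l : ℕ∞) ∧ SmP x = ⊤} ∩ coordT 0)
      = μ ({x : Path | SpP x = ((0 : ℕ) : ℕ∞) ∧ SmP x = ⊤} ∩ coordT 0) := by
  rw [decompR l, decompL l]
  have hdisR : Pairwise (Disjoint on fun (B : {B : Finset ℤ // B ∈ RKL l}) =>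
      RightSet B.1 0 ∩ InfSet) :=
    fun B B' hne => rightSet_disjoint_R B.2 B'.2 (fun h => hne (Subtype.ext h))
  have hdisL : Pairwise (Disjoint on fun (C : {C : Finset ℤ // C ∈ LKL l}) =>
      RightSet C.1 (C.1.min' ⟨0, C.2.1⟩) ∩ InfSet) :=
    fun C C' hne => rightSet_disjoint_L C.2 C'.2 (fun h => hne (Subtype.ext h))
  rw [measure_iUnion hdisR (fun B => (measurableSet_RightSet _ _).inter measurableSet_InfSet),
    measure_iUnion hdisL (fun C => (measurableSet_RightSet _ _).inter measurableSet_InfSet)]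
  rw [← Equiv.tsum_eq (rlEquiv l) (fun C => μ (RightSet C.1 (C.1.min' ⟨0, C.2.1⟩) ∩ InfSet))]
  refine tsum_congr fun Bs => ?_
  obtain ⟨B, hB⟩ := Bs
  show μ (RightSet B 0 ∩ InfSet)
      = μ (RightSet (toL B) ((toL B).min' ⟨0, (toL_mem hB).1⟩) ∩ InfSet)
  have hb := right_shift μ h0 hsh (B := B) (m := 0) hB.2.1 hB.1 (B.max'_mem ⟨0, hB.1⟩)
  rw [min'_toL hB, toL_eq (⟨0, hB.1⟩ : B.Nonempty)]
  rw [zero_add] at hb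
  exact hb

include h0 hsh in
lemma spp_coe_smp_top (l : ℕ) : μ {x : Path | SpP x = (l : ℕ∞) ∧ SmP x = ⊤} = 0 := by
  have hDmeas : ∀ j : ℕ,
      MeasurableSet ({x : Path | SpP x = (j : ℕ∞) ∧ SmP x = ⊤} ∩ coordT 0) :=
    fun j => (measurableSet_pairPS _ _).inter (measurableSet_coordT 0)
  have hdisj : Pairwise (Disjoint on fun j : ℕ =>
      {x : Path | SpP x = (j : ℕ∞) ∧ SmP x = ⊤} ∩ coordT 0) := by
    intro i j hne
    rw [Function.onFun, Set.disjoint_left]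
    rintro x ⟨⟨h1, _⟩, _⟩ ⟨⟨h2, _⟩, _⟩
    rw [h1] at h2
    exact hne (by exact_mod_cast h2)
  have hsum : ∑' j : ℕ, μ ({x : Path | SpP x = (j : ℕ∞) ∧ SmP x = ⊤} ∩ coordT 0) ≤ 1 := by
    rw [← measure_iUnion hdisj hDmeas]
    exact prob_le_one
  have hzero : μ ({x : Path | SpP x = ((0 : ℕ) : ℕ∞) ∧ SmP x = ⊤} ∩ coordT 0) = 0 := by
    by_contra hne
    have htop : ∑' j : ℕ, μ ({x : Path | SpP x = (j : ℕ∞) ∧ SmP x = ⊤} ∩ coordT 0) = ⊤ := by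
      have hcongr : ∀ j : ℕ, μ ({x : Path | SpP x = (j : ℕ∞) ∧ SmP x = ⊤} ∩ coordT 0)
          = μ ({x : Path | SpP x = ((0 : ℕ) : ℕ∞) ∧ SmP x = ⊤} ∩ coordT 0) :=
        fun j => spp_inf_const μ h0 hsh j
      rw [tsum_congr hcongr]
      exact ENNReal.tsum_const_eq_top_of_ne_zero hne
    rw [htop] at hsum
    exact absurd hsum (by simp)
  calc μ {x : Path | SpP x = (l : ℕ∞) ∧ SmP x = ⊤}
      = μ ({x : Path | SpP x = (l : ℕ∞) ∧ SmP x = ⊤} ∩ coordT 0) :=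
        (inter_coord0 μ h0 _).symm
    _ = 0 := by rw [spp_inf_const μ h0 hsh l, hzero]

include h0 hsh in
lemma smp_coe_spp_top (l : ℕ) : μ {x : Path | SmP x = (l : ℕ∞) ∧ SpP x = ⊤} = 0 := by
  have hinst : IsProbabilityMeasure (μ.map reflP) :=
    Measure.isProbabilityMeasure_map measurable_reflP.aemeasurable
  have hres := spp_coe_smp_top (μ.map reflP) (h0_reflP μ h0) (hsh_reflP μ hsh) l
  rw [Measure.map_apply measurable_reflP (measurableSet_pairPS ((l : ℕ∞)) ⊤)] at hres
  have hpre : reflP ⁻¹' {x : Path | SpP x = (l : ℕ∞) ∧ SmP x = ⊤}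
      = {x : Path | SmP x = (l : ℕ∞) ∧ SpP x = ⊤} := by
    ext x
    simp only [Set.mem_preimage, Set.mem_setOf_eq, spp_reflP, smp_reflP]
  rwa [hpre] at hres

include h0 hsh in
theorem pair_symmetric (k l : ℕ∞) :
    μ {x : Path | SmP x = k ∧ SpP x = l} = μ {x : Path | SmP x = l ∧ SpP x = k} := by
  cases k with
  | top =>
    cases l with
    | top => rfl
    | coe l =>
      have h1 : {x : Path | SmP x = ⊤ ∧ SpP x = (l : ℕ∞)}
          = {x : Path | SpP x = (l : ℕ∞) ∧ SmP x = ⊤} := by ext x; exact and_comm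
      rw [h1, spp_coe_smp_top μ h0 hsh l, smp_coe_spp_top μ h0 hsh l]
  | coe k =>
    cases l with
    | top =>
      rw [smp_coe_spp_top μ h0 hsh k]
      have h1 : {x : Path | SmP x = ⊤ ∧ SpP x = (k : ℕ∞)}
          = {x : Path | SpP x = (k : ℕ∞) ∧ SmP x = ⊤} := by ext x; exact and_comm
      rw [h1, spp_coe_smp_top μ h0 hsh k]
    | coe l => exact pair_sym_fin μ h0 hsh k l

include h0 hsh in
theorem marginal_symmetric (k : ℕ∞) :
    μ {x : Path | SmP x = k} = μ {x : Path | SpP x = k} := by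
  have hdec1 : {x : Path | SmP x = k} = ⋃ l : ℕ∞, {x : Path | SmP x = k ∧ SpP x = l} := by
    ext x
    simp only [Set.mem_setOf_eq, Set.mem_iUnion]
    constructor
    · intro h; exact ⟨SpP x, h, rfl⟩
    · rintro ⟨l, h, _⟩; exact h
  have hdec2 : {x : Path | SpP x = k} = ⋃ l : ℕ∞, {x : Path | SmP x = l ∧ SpP x = k} := by
    ext x
    simp only [Set.mem_setOf_eq, Set.mem_iUnion]
    constructor
    · intro h; exact ⟨SmP x, rfl, h⟩
    · rintro ⟨l, _, h⟩; exact h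
  have hdisj1 : Pairwise (Disjoint on fun l : ℕ∞ =>
      {x : Path | SmP x = k ∧ SpP x = l}) := by
    intro i j hne
    rw [Function.onFun, Set.disjoint_left]
    rintro x ⟨_, h1⟩ ⟨_, h2⟩
    rw [h1] at h2
    exact hne h2
  have hdisj2 : Pairwise (Disjoint on fun l : ℕ∞ =>
      {x : Path | SmP x = l ∧ SpP x = k}) := by
    intro i j hne
    rw [Function.onFun, Set.disjoint_left]
    rintro x ⟨h1, _⟩ ⟨h2, _⟩
    rw [h1] at h2
    exact hne h2
  rw [hdec1, hdec2, measure_iUnion hdisj1 (fun l => measurableSet_pair k l),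
    measure_iUnion hdisj2 (fun l => measurableSet_pair l k)]
  exact tsum_congr fun l => pair_symmetric μ h0 hsh k l

end Abstract
end ClusterSym


/-- The cluster `C(ω) = {t : I_t(ω) = 1}` of a binary process. -/
def clusterSet {Ω : Type*} (I : ℤ → Ω → Bool) (ω : Ω) : Set ℤ :=
  {t : ℤ | I t ω = true}

/-- Inspected cluster size `Sⁱ(ω) = Σ_{t ∈ ℤ} I_t(ω) ∈ ℕ ∪ {∞}`. -/
def SiFn {Ω : Type*} (I : ℤ → Ω → Bool) (ω : Ω) : ℕ∞ :=
  {t : ℤ | I t ω = true}.encard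

/-- Forward inspected cluster size `S₊ⁱ(ω) = Σ_{t ≥ 1} I_t(ω) ∈ ℕ₀ ∪ {∞}`. -/
def SplusFn {Ω : Type*} (I : ℤ → Ω → Bool) (ω : Ω) : ℕ∞ :=
  {t : ℤ | 0 < t ∧ I t ω = true}.encard

/-- Backward inspected cluster size `S₋ⁱ(ω) = Σ_{t ≤ -1} I_t(ω) ∈ ℕ₀ ∪ {∞}`. -/
def SminusFn {Ω : Type*} (I : ℤ → Ω → Bool) (ω : Ω) : ℕ∞ :=
  {t : ℤ | t < 0 ∧ I t ω = true}.encard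

/-- Theorem 3.2(a), first claim: under Assumption 1, the law of `(S₋ⁱ, S₊ⁱ)` is
symmetric; in particular `S₋ⁱ` and `S₊ⁱ` have the same distribution. -/
theorem cluster_size_pair_symmetric
    {Ω : Type*} [MeasurableSpace Ω] (P : Measure Ω) [IsProbabilityMeasure P]
    (I : ℤ → Ω → Bool) (hI : ∀ t, Measurable (I t))
    {Ωn : ℕ → Type*} [∀ n, MeasurableSpace (Ωn n)]
    (Pn : ∀ n, Measure (Ωn n)) (hPn : ∀ n, IsProbabilityMeasure (Pn n))
    (In : ∀ n, ℤ → Ωn n → Bool) (hIn : ∀ n t, Measurable (In n t))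
    -- `P(I₀ⁿ = 1) > 0` for all `n`
    (hpos : ∀ n, 0 < Pn n {ω | In n 0 ω = true})
    -- stationarity of each `(Iₜⁿ)ₜ`
    (hstat : ∀ n (F : Finset ℤ) (ε : ℤ → Bool) (k : ℤ),
      Pn n {ω | ∀ t ∈ F, In n t ω = ε t} = Pn n {ω | ∀ t ∈ F, In n (t + k) ω = ε t})
    -- convergence of the conditional finite-dimensional distributions
    (hconv : ∀ (F : Finset ℤ) (ε : ℤ → Bool),
      Tendsto (fun n =>
          Pn n ({ω | ∀ t ∈ F, In n t ω = ε t} ∩ {ω | In n 0 ω = true})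
            / Pn n {ω | In n 0 ω = true}) atTop
        (nhds (P {ω | ∀ t ∈ F, I t ω = ε t})))

    :
    (∀ k l : ℕ∞, P {ω | SminusFn I ω = k ∧ SplusFn I ω = l}
        = P {ω | SminusFn I ω = l ∧ SplusFn I ω = k})
    ∧ ∀ k : ℕ∞, P {ω | SminusFn I ω = k} = P {ω | SplusFn I ω = k} := by
  classical
  have hYmeas : Measurable (fun ω t => I t ω : Ω → ClusterSym.Path) :=
    measurable_pi_lambda _ (fun t => hI t)
  set μ : Measure ClusterSym.Path := P.map (fun ω t => I t ω) with hμ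
  haveI hinst : IsProbabilityMeasure μ := Measure.isProbabilityMeasure_map hYmeas.aemeasurable
  have hcyl : ∀ (F : Finset ℤ) (ε : ℤ → Bool),
      μ (ClusterSym.cylC F ε) = P {ω | ∀ t ∈ F, I t ω = ε t} := by
    intro F ε
    rw [hμ, Measure.map_apply hYmeas (ClusterSym.measurableSet_cylC F ε)]
    rfl
  -- Step A : P(I₀ = 1) = 1 in the limit
  have hP0 : P {ω | ∀ t ∈ ({0} : Finset ℤ), I t ω = (fun _ => true) t} = 1 := by
    have h1 := hconv {0} (fun _ => true)
    have hconst : (fun n => Pn n ({ω | ∀ t ∈ ({0} : Finset ℤ), In n t ω = (fun _ => true) t}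
          ∩ {ω | In n 0 ω = true}) / Pn n {ω | In n 0 ω = true})
        = fun _ => (1 : ℝ≥0∞) := by
      funext n
      have he : {ω | ∀ t ∈ ({0} : Finset ℤ), In n t ω = (fun _ => true) t}
          = {ω | In n 0 ω = true} := by
        ext ω; simp
      rw [he, Set.inter_self]
      exact ENNReal.div_self (ne_of_gt (hpos n)) (measure_ne_top _ _)
    rw [hconst] at h1
    exact (tendsto_nhds_unique tendsto_const_nhds h1).symm
  have h0 : μ (ClusterSym.coordT 0) = 1 := by
    have he : ClusterSym.coordT 0 = ClusterSym.cylC {0} (fun _ => true) := by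
      ext x; simp [ClusterSym.coordT, ClusterSym.cylC]
    rw [he, hcyl]
    exact hP0
  -- Step B : point-stationarity of the limit on cylinders
  have hsh : ∀ (F : Finset ℤ) (ε : ℤ → Bool) (a : ℤ), 0 ∈ F → a ∈ F → ε 0 = true →
      ε a = true →
      μ (ClusterSym.cylC F ε)
        = μ (ClusterSym.shift (-a) ⁻¹' ClusterSym.cylC F ε) := by
    intro F ε a h0F haF hε0 hεa
    rw [ClusterSym.shift_preimage_cylC, hcyl F ε,
      hcyl (F.image (· + -a)) (fun s => ε (s - -a))]
    have h1 := hconv F ε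
    have h2 := hconv (F.image (· + -a)) (fun s => ε (s - -a))
    have h0F' : (0 : ℤ) ∈ F.image (· + -a) := Finset.mem_image.mpr ⟨a, haF, by ring⟩
    have hε0' : ε ((0 : ℤ) - -a) = true := by
      have he : (0 : ℤ) - -a = a := by ring
      rw [he]; exact hεa
    have h1' : Tendsto (fun n =>
        Pn n ({ω | ∀ t ∈ F.image (· + -a), In n t ω = (fun s => ε (s - -a)) t}
            ∩ {ω | In n 0 ω = true}) / Pn n {ω | In n 0 ω = true}) atTop
        (nhds (P {ω | ∀ t ∈ F, I t ω = ε t})) := by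
      refine h1.congr fun n => ?_
      congr 1
      have e1 : {ω | ∀ t ∈ F, In n t ω = ε t} ∩ {ω | In n 0 ω = true}
          = {ω | ∀ t ∈ F, In n t ω = ε t} :=
        Set.inter_eq_left.mpr (fun ω hω => by
          show In n 0 ω = true
          rw [hω 0 h0F, hε0])
      have e2 : {ω | ∀ t ∈ F.image (· + -a), In n t ω = (fun s => ε (s - -a)) t}
            ∩ {ω | In n 0 ω = true}
          = {ω | ∀ t ∈ F.image (· + -a), In n t ω = (fun s => ε (s - -a)) t} :=
        Set.inter_eq_left.mpr (fun ω hω => by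
          show In n 0 ω = true
          rw [hω 0 h0F']
          exact hε0')
      rw [e1, e2]
      rw [hstat n F ε (-a)]
      congr 1
      ext ω
      simp only [Set.mem_setOf_eq]
      constructor
      · intro h s hs
        obtain ⟨t, ht, rfl⟩ := Finset.mem_image.mp hs
        have he : t + -a - -a = t := by ring
        rw [he]
        exact h t ht
      · intro h t ht
        have h2' := h (t + -a) (Finset.mem_image.mpr ⟨t, ht, rfl⟩)
        have he : t + -a - -a = t := by ring
        rwa [he] at h2'
    exact tendsto_nhds_unique h1' h2
  -- identification of the target sets
  have hsetPair : ∀ k l : ℕ∞, P {ω | SminusFn I ω = k ∧ SplusFn I ω = l}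
      = μ {x : ClusterSym.Path | ClusterSym.SmP x = k ∧ ClusterSym.SpP x = l} := by
    intro k l
    rw [hμ, Measure.map_apply hYmeas (ClusterSym.measurableSet_pair k l)]
    rfl
  have hsetM : ∀ k : ℕ∞, P {ω | SminusFn I ω = k}
      = μ {x : ClusterSym.Path | ClusterSym.SmP x = k} := by
    intro k
    rw [hμ, Measure.map_apply hYmeas (ClusterSym.measurableSet_SmP_eq k)]
    rfl
  have hsetP : ∀ k : ℕ∞, P {ω | SplusFn I ω = k}
      = μ {x : ClusterSym.Path | ClusterSym.SpP x = k} := by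
    intro k
    rw [hμ, Measure.map_apply hYmeas (ClusterSym.measurableSet_SpP_eq k)]
    rfl
  constructor
  · intro k l
    rw [hsetPair k l, hsetPair l k]
    exact ClusterSym.pair_symmetric μ h0 hsh k l
  · intro k
    rw [hsetM k, hsetP k]
    exact ClusterSym.marginal_symmetric μ h0 hsh k
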